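/- Let (E,𝓛,Ē^{0,-}) be a weakly left-resolving and strongly cofinal labelled space satisfying the standing assumptions, such that {w} ∈ Ē^{0,-} for every w ∈ E^0. If [v]_l is not disagreeable for some v ∈ E^0 and l ≥ 1, then 𝓛(vE^∞) = {β^∞} for a single simple labelled path β ∈ 𝓛(E^{≤l}), i.e., there is exactly one infinite labelled path with source v and it is periodic with simple period of length at most l. -/

import Mathlib

open scoped BigOperators

/-- The `n`-fold concatenation power of a word. -/
def wpow {A : Type*} (β : List A) : ℕ → List A
  | 0 => []
  | n + 1 => β ++ wpow β n

/-- A word is simple if it is not a power of a strictly shorter word. -/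
def SimpleWord {A : Type*} (β : List A) : Prop :=
  β ≠ [] ∧ ¬ ∃ (δ : List A) (n : ℕ), δ ≠ [] ∧ δ.length < β.length ∧ 1 ≤ n ∧ β = wpow δ n

/-- The initial segment `x_{[1,N]}` of an infinite word. -/
def finTake {A : Type*} (x : ℕ → A) (N : ℕ) : List A := List.ofFn (fun i : Fin N => x i)

/-- `x = β^∞`, the periodic infinite word with period `β`. -/
def isPowInf {A : Type*} (β : List A) (x : ℕ → A) : Prop :=
  ∃ h : β ≠ [], ∀ n : ℕ,
    x n = β.get ⟨n % β.length, Nat.mod_lt n (List.length_pos_iff.mpr h)⟩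

/-- A labelled graph: a directed graph together with a surjective labelling of edges. -/
structure LabelledGraph (V : Type*) (Ed : Type*) (A : Type*) where
  src : Ed → V
  rng : Ed → V
  lbl : Ed → A
  lbl_surj : Function.Surjective lbl

/-- A finite path (of length ≥ 1) in a directed graph. -/
structure LabelledGraph.GPath {V Ed A : Type*} (G : LabelledGraph V Ed A) where
  edges : List Ed
  ne : edges ≠ []
  chain : edges.Chain' (fun e f => G.rng e = G.src f)

/-- An infinite path in a directed graph. -/
structure LabelledGraph.GInfPath {V Ed A : Type*} (G : LabelledGraph V Ed A) where
  edges : ℕ → Ed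
  chain : ∀ n, G.rng (edges n) = G.src (edges (n + 1))

namespace LabelledGraph

variable {V Ed A : Type*}

def GPath.src {G : LabelledGraph V Ed A} (p : G.GPath) : V := G.src (p.edges.head p.ne)

def GPath.rng {G : LabelledGraph V Ed A} (p : G.GPath) : V := G.rng (p.edges.getLast p.ne)

def GPath.label {G : LabelledGraph V Ed A} (p : G.GPath) : List A := p.edges.map G.lbl

def GPath.len {G : LabelledGraph V Ed A} (p : G.GPath) : ℕ := p.edges.length

def GInfPath.src {G : LabelledGraph V Ed A} (q : G.GInfPath) : V := G.src (q.edges 0)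

def GInfPath.label {G : LabelledGraph V Ed A} (q : G.GInfPath) : ℕ → A :=
  fun n => G.lbl (q.edges n)

variable (G : LabelledGraph V Ed A)

/-- `α ∈ 𝓛(E^{≥1})`: `α` is the label of some finite path. -/
def IsLabelled (α : List A) : Prop := ∃ p : G.GPath, p.label = α

/-- `s(α)`, the set of sources of paths labelled `α`. -/
def srcSet (α : List A) : Set V := { v | ∃ p : G.GPath, p.label = α ∧ p.src = v }

/-- `r(α)`, the set of ranges of paths labelled `α`. -/
def rngSet (α : List A) : Set V := { v | ∃ p : G.GPath, p.label = α ∧ p.rng = v }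

/-- The relative range `r(S,α)` of `α` with respect to `S`. -/
def relRange (S : Set V) (α : List A) : Set V :=
  { v | ∃ p : G.GPath, p.label = α ∧ p.src ∈ S ∧ p.rng = v }

/-- `x ∈ 𝓛(E^∞)`: the infinite word `x` is the label of some infinite path. -/
def IsInfLabelled (x : ℕ → A) : Prop := ∃ q : G.GInfPath, q.label = x

/-- `s(x)` for an infinite labelled path `x`. -/
def infSrc (x : ℕ → A) : Set V := { v | ∃ q : G.GInfPath, q.label = x ∧ q.src = v }

/-- `𝓛(SE^1)`: labels of edges with source in `S`. -/
def labelsFrom (S : Set V) : Set A := { a | ∃ e : Ed, G.src e ∈ S ∧ G.lbl e = a }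

/-- `𝓛(E^1S)`: labels of edges with range in `S`. -/
def labelsInto (S : Set V) : Set A := { a | ∃ e : Ed, G.rng e ∈ S ∧ G.lbl e = a }

/-- `𝓛(SE^n)`: labels of paths of length `n` with source in `S`. -/
def nLabelsFrom (S : Set V) (n : ℕ) : Set (List A) :=
  { α | ∃ p : G.GPath, p.label = α ∧ p.src ∈ S ∧ p.len = n }

/-- `𝓛(E^{≤l}v)`: labels of paths of length at most `l` with range `v`. -/
def labelsToVtx (l : ℕ) (v : V) : Set (List A) :=
  { α | ∃ p : G.GPath, p.label = α ∧ p.len ≤ l ∧ p.rng = v }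

/-- The generalized vertex `[v]_l`. -/
def genVertex (l : ℕ) (v : V) : Set V := { w | G.labelsToVtx l w = G.labelsToVtx l v }

/-- `Ē^{0,-}`: the collection of all finite unions of generalized vertices. -/
def barE : Set (Set V) :=
  { S | ∃ (l : ℕ) (F : Finset V), 1 ≤ l ∧ S = ⋃ v ∈ F, G.genVertex l v }

/-- An accommodating set for `(E,𝓛)`. -/
structure Accommodating (B : Set (Set V)) : Prop where
  empty_mem : ∅ ∈ B
  relRange_mem : ∀ S ∈ B, ∀ α : List A, G.IsLabelled α → G.relRange S α ∈ B
  inter_mem : ∀ S ∈ B, ∀ T ∈ B, S ∩ T ∈ B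
  union_mem : ∀ S ∈ B, ∀ T ∈ B, S ∪ T ∈ B
  rng_mem : ∀ α : List A, G.IsLabelled α → G.rngSet α ∈ B

/-- `𝓔^{0,-}`: the smallest accommodating set for `(E,𝓛)`. -/
def smallestAcc : Set (Set V) :=
  { S | ∀ B : Set (Set V), G.Accommodating B → S ∈ B }

/-- The labelled space `(E,𝓛,B)` is weakly left-resolving. -/
def WeaklyLeftResolving (B : Set (Set V)) : Prop :=
  ∀ S ∈ B, ∀ T ∈ B, ∀ α : List A, G.IsLabelled α →
    G.relRange S α ∩ G.relRange T α = G.relRange (S ∩ T) α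

/-- Standing assumptions: no sinks, set-finite, receiver set-finite, and
edges are determined by source, range and label. -/
structure StandingAssumptions (B : Set (Set V)) : Prop where
  no_sinks : ∀ v : V, ∃ e : Ed, G.src e = v
  set_finite : ∀ S ∈ B, (G.labelsFrom S).Finite
  receiver_set_finite : ∀ S ∈ B, (G.labelsInto S).Finite
  edge_eq : ∀ e f : Ed, G.src e = G.src f → G.rng e = G.rng f → G.lbl e = G.lbl f → e = f

/-- `(E,𝓛,B)` is strongly cofinal. -/
def StronglyCofinal : Prop :=
  ∀ x : ℕ → A, G.IsInfLabelled x → ∀ l : ℕ, 1 ≤ l → ∀ v : V, ∀ w ∈ G.infSrc x,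
    ∃ N : ℕ, 1 ≤ N ∧ ∃ (m : ℕ) (lds : Fin m → List A),
      (∀ i, G.IsLabelled (lds i)) ∧
      G.relRange (G.genVertex 1 w) (finTake x N) ⊆ ⋃ i, G.relRange (G.genVertex l v) (lds i)

/-- `(E,𝓛,B)` is `l`-cofinal. -/
def LCofinal (l : ℕ) : Prop :=
  ∀ x : ℕ → A, G.IsInfLabelled x → ∀ v : V, ∀ w ∈ G.infSrc x,
    ∃ d : ℕ, l ≤ d ∧ ∃ N : ℕ, 1 ≤ N ∧ ∃ (m : ℕ) (lds : Fin m → List A),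
      (∀ i, G.IsLabelled (lds i)) ∧
      G.relRange (G.genVertex d w) (finTake x N) ⊆ ⋃ i, G.relRange (G.genVertex l v) (lds i)

/-- `(E,𝓛,B)` is cofinal: `l`-cofinal for all `l ≥ L`, for some `L > 0`. -/
def Cofinal : Prop := ∃ L : ℕ, 0 < L ∧ ∀ l : ℕ, L ≤ l → G.LCofinal l

/-- `α` is agreeable for `[v]_l` (the condition only involves `l`):
`α = βα' = α'γ` with `|β| = |γ| ≤ l`. -/
def Agreeable (l : ℕ) (α : List A) : Prop :=
  ∃ β α' γ : List A, G.IsLabelled β ∧ G.IsLabelled α' ∧ G.IsLabelled γ ∧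
    β.length = γ.length ∧ β.length ≤ l ∧ α = β ++ α' ∧ α = α' ++ γ

/-- `α` (a labelled path with `s(α) ∩ [v]_l ≠ ∅`) is disagreeable for `[v]_l`. -/
def DisagreeablePath (l : ℕ) (v : V) (α : List A) : Prop :=
  G.IsLabelled α ∧ (G.srcSet α ∩ G.genVertex l v).Nonempty ∧ ¬ G.Agreeable l α

/-- The generalized vertex `[v]_l` is disagreeable. -/
def DisagreeableVtx (l : ℕ) (v : V) : Prop :=
  ∃ N : ℕ, 0 < N ∧ ∀ n : ℕ, N < n →
    ∃ α : List A, n ≤ α.length ∧ G.DisagreeablePath l v α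

/-- The labelled space is disagreeable. -/
def DisagreeableSpace : Prop :=
  ∀ v : V, ∃ L : ℕ, 0 < L ∧ ∀ l : ℕ, L < l → G.DisagreeableVtx l v

/-- A representation of the labelled space `(E,𝓛,B)` in a C*-algebra `𝔄`. -/
structure Rep (B : Set (Set V)) (𝔄 : Type*) [NonUnitalCStarAlgebra 𝔄] where
  p : Set V → 𝔄
  s : A → 𝔄
  p_empty : p ∅ = 0
  p_proj : ∀ S ∈ B, star (p S) = p S ∧ p S * p S = p S
  s_pisom : ∀ a : A, s a * star (s a) * s a = s a
  p_inter : ∀ S ∈ B, ∀ T ∈ B, p (S ∩ T) = p S * p T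
  p_union : ∀ S ∈ B, ∀ T ∈ B, p (S ∪ T) = p S + p T - p (S ∩ T)
  p_s : ∀ S ∈ B, ∀ a : A, p S * s a = s a * p (G.relRange S [a])
  s_star_s : ∀ a : A, star (s a) * s a = p (G.rngSet [a])
  s_orth : ∀ a b : A, a ≠ b → star (s a) * s b = 0
  p_sum : ∀ S ∈ B, ∀ h : (G.labelsFrom S).Finite, (G.labelsFrom S).Nonempty →
    p S = ∑ a ∈ h.toFinset, s a * p (G.relRange S [a]) * star (s a)

variable {G}

/-- `s_α = s_{α_1} ⋯ s_{α_n}` for a word `α`. -/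
def Rep.sWord {B : Set (Set V)} {𝔄 : Type*} [NonUnitalCStarAlgebra 𝔄]
    (ρ : G.Rep B 𝔄) : List A → 𝔄
  | [] => 0
  | a :: rest => rest.foldl (fun x b => x * ρ.s b) (ρ.s a)

/-- The C*-algebra `𝔄` is generated by the representation `ρ`. -/
def Rep.Generates {B : Set (Set V)} {𝔄 : Type*} [NonUnitalCStarAlgebra 𝔄]
    (ρ : G.Rep B 𝔄) : Prop :=
  closure (↑(NonUnitalStarAlgebra.adjoin ℂ
    (Set.range ρ.s ∪ ρ.p '' B)) : Set 𝔄) = Set.univ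

/-- The representation `ρ` is universal. -/
def Rep.Universal {B : Set (Set V)} {𝔄 : Type*} [NonUnitalCStarAlgebra 𝔄]
    (ρ : G.Rep B 𝔄) : Prop :=
  ∀ (C : Type*) [NonUnitalCStarAlgebra C], ∀ ρ' : G.Rep B C,
    ∃ φ : 𝔄 →⋆ₙₐ[ℂ] C, (∀ a : A, φ (ρ.s a) = ρ'.s a) ∧ ∀ S ∈ B, φ (ρ.p S) = ρ'.p S

end LabelledGraph

/-- A C*-algebra is simple if its only closed two-sided ideals are `{0}` and the
whole algebra. -/
def IsSimpleCStarAlgebra (𝔄 : Type*) [NonUnitalCStarAlgebra 𝔄] : Prop :=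
  ∀ I : TwoSidedIdeal 𝔄, IsClosed (I : Set 𝔄) →
    (I : Set 𝔄) = {0} ∨ (I : Set 𝔄) = Set.univ


/- ===================== Auxiliary development ===================== -/

section Aux

open List

/-- Periodic functions: adding a multiple of the period. -/
lemma per_add_mul {α : Type*} {z : ℕ → α} {k : ℕ} (hz : ∀ i, z (i + k) = z i) :
    ∀ (j a : ℕ), z (a + j * k) = z a := by
  intro j
  induction j with
  | zero => intro a; simp
  | succ j ih =>
    intro a
    have : a + (j + 1) * k = (a + k) + j * k := by ring
    rw [this, ih (a + k), hz a]

lemma per_of_dvd {α : Type*} {z : ℕ → α} {p r : ℕ} (hz : ∀ i, z (i + p) = z i)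
    (h : p ∣ r) : ∀ i, z (i + r) = z i := by
  intro i
  obtain ⟨t, rfl⟩ := h
  have : i + p * t = i + t * p := by ring
  rw [this, per_add_mul hz t i]

lemma per_mod {α : Type*} {z : ℕ → α} {k : ℕ} (hk : 0 < k)
    (hz : ∀ i, z (i + k) = z i) (i : ℕ) : z i = z (i % k) := by
  conv_lhs => rw [← Nat.mod_add_div i k, Nat.mul_comm k (i / k)]
  rw [per_add_mul hz (i / k) (i % k)]

lemma wpow_length {α : Type*} (β : List α) : ∀ n, (wpow β n).length = n * β.length := by
  intro n
  induction n with
  | zero => simp [wpow]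
  | succ n ih => simp [wpow, ih]; ring

lemma wpow_getElem {α : Type*} (δ : List α) (hδ : δ ≠ []) :
    ∀ (n i : ℕ) (h : i < (wpow δ n).length),
      (wpow δ n)[i] = δ[i % δ.length]'(Nat.mod_lt _ (List.length_pos_iff.mpr hδ)) := by
  intro n
  induction n with
  | zero => intro i h; simp [wpow] at h
  | succ n ih =>
    intro i h
    show (δ ++ wpow δ n)[i]'(by simpa [wpow] using h) = _
    by_cases hi : i < δ.length
    · rw [List.getElem_append_left hi]
      congr 1
      exact (Nat.mod_eq_of_lt hi).symm
    · push_neg at hi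
      have h2 : i - δ.length < (wpow δ n).length := by
        have : i < (δ ++ wpow δ n).length := h
        simp [List.length_append] at this
        omega
      rw [List.getElem_append_right hi, ih (i - δ.length) h2]
      congr 1
      exact (Nat.mod_eq_sub_mod hi).symm

namespace LabelledGraph

variable {V Ed A : Type*} {G : LabelledGraph V Ed A}

lemma getElem_idx_congr {α : Type*} (L : List α) {i j : ℕ} (h : i = j) (hi : i < L.length) :
    L[i] = L[j]'(h ▸ hi) := by subst h; rfl

lemma label_apply (q : G.GInfPath) (n : ℕ) : q.label n = G.lbl (q.edges n) := rfl

/-- The tail of an infinite path. -/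
def ipTail (q : G.GInfPath) (N : ℕ) : G.GInfPath where
  edges n := q.edges (N + n)
  chain n := by
    have := q.chain (N + n)
    rwa [Nat.add_succ] at this

@[simp] lemma ipTail_edges (q : G.GInfPath) (N n : ℕ) : (ipTail q N).edges n = q.edges (N + n) := rfl

/-- The prefix path (first `N` edges) of an infinite path. -/
def ipPrefix (q : G.GInfPath) (N : ℕ) (hN : 0 < N) : G.GPath where
  edges := List.ofFn (fun i : Fin N => q.edges i)
  ne := by
    simp only [ne_eq, List.ofFn_eq_nil_iff]
    omega
  chain := by
    rw [List.Chain', List.isChain_iff_getElem]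
    intro i hi
    simp only [List.length_ofFn] at hi
    simp only [List.get_eq_getElem, List.getElem_ofFn]
    exact q.chain i

@[simp] lemma ipPrefix_edges (q : G.GInfPath) (N : ℕ) (hN : 0 < N) :
    (ipPrefix q N hN).edges = List.ofFn (fun i : Fin N => q.edges i) := rfl

lemma ipPrefix_label (q : G.GInfPath) (N : ℕ) (hN : 0 < N) :
    (ipPrefix q N hN).label = finTake q.label N := by
  simp [GPath.label, ipPrefix, List.map_ofFn, finTake]
  rfl

lemma ipPrefix_len (q : G.GInfPath) (N : ℕ) (hN : 0 < N) :
    (ipPrefix q N hN).edges.length = N := by simp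

lemma ipPrefix_src (q : G.GInfPath) (N : ℕ) (hN : 0 < N) :
    (ipPrefix q N hN).src = q.src := by
  show G.src _ = G.src (q.edges 0)
  congr 1
  rw [List.head_eq_getElem]
  simp [ipPrefix]

lemma ipPrefix_rng (q : G.GInfPath) (N : ℕ) (hN : 0 < N) :
    (ipPrefix q N hN).rng = G.src (q.edges N) := by
  show G.rng ((ipPrefix q N hN).edges.getLast _) = _
  rw [List.getLast_eq_getElem]
  simp only [ipPrefix_edges, List.length_ofFn, List.getElem_ofFn]
  have := q.chain (N - 1)
  rwa [show N - 1 + 1 = N by omega] at this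

lemma GInfPath.src_eq (q : G.GInfPath) : q.src = G.src (q.edges 0) := rfl

/-- Concatenation of a finite edge list onto an infinite path. -/
def consPath (L : List Ed) (q : G.GInfPath)
    (hch : L.Chain' (fun e f => G.rng e = G.src f))
    (hlink : ∀ _ : 0 < L.length, G.rng (L[L.length - 1]'(by omega)) = G.src (q.edges 0)) :
    G.GInfPath where
  edges n := if h : n < L.length then L[n] else q.edges (n - L.length)
  chain n := by
    by_cases h1 : n + 1 < L.length
    · have h0 : n < L.length := by omega
      simp only [dif_pos h0, dif_pos h1]
      have := List.isChain_iff_getElem.mp hch n (by omega)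
      simpa using this
    · by_cases h0 : n < L.length
      · have hn : n = L.length - 1 := by omega
        subst hn
        simp only [dif_pos h0, dif_neg h1]
        rw [show L.length - 1 + 1 - L.length = 0 by omega]
        exact hlink (by omega)
      · simp only [dif_neg h0, dif_neg h1]
        have h2 : n + 1 - L.length = (n - L.length) + 1 := by omega
        rw [h2]
        exact q.chain _

lemma consPath_edges_lt {L : List Ed} {q : G.GInfPath} {hch} {hlink} {n : ℕ} (h : n < L.length) :
    (consPath L q hch hlink).edges n = L[n] := dif_pos h

lemma consPath_edges_ge {L : List Ed} {q : G.GInfPath} {hch} {hlink} {n : ℕ} (h : L.length ≤ n) :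
    (consPath L q hch hlink).edges n = q.edges (n - L.length) := dif_neg (by omega)

/-- Backward determinism from weak left-resolving + singletons + edge uniqueness. -/
lemma backdet (hwlr : G.WeaklyLeftResolving G.barE)
    (hsing : ∀ w : V, ({w} : Set V) ∈ G.barE)
    (hedge : ∀ e f : Ed, G.src e = G.src f → G.rng e = G.rng f → G.lbl e = G.lbl f → e = f)
    {e f : Ed} (hr : G.rng e = G.rng f) (hlb : G.lbl e = G.lbl f) : e = f := by
  refine hedge e f ?_ hr hlb
  by_contra hs
  have singpath : ∀ g : Ed, ∃ p : G.GPath, p.edges = [g] := by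
    intro g
    exact ⟨⟨[g], by simp, List.isChain_singleton g⟩, rfl⟩
  obtain ⟨pe, hpe⟩ := singpath e
  obtain ⟨pf, hpf⟩ := singpath f
  have hpel : pe.label = [G.lbl e] := by simp [GPath.label, hpe]
  have hpfl : pf.label = [G.lbl e] := by simp [GPath.label, hpf, hlb]
  have hlab : G.IsLabelled [G.lbl e] := ⟨pe, hpel⟩
  have hkey := hwlr {G.src e} (hsing _) {G.src f} (hsing _) [G.lbl e] hlab
  have hmem : G.rng e ∈ G.relRange {G.src e} [G.lbl e] ∩ G.relRange {G.src f} [G.lbl e] := by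
    constructor
    · exact ⟨pe, hpel, by simp [GPath.src, hpe], by simp [GPath.rng, hpe]⟩
    · exact ⟨pf, hpfl, by simp [GPath.src, hpf], by simp [GPath.rng, hpf, hr]⟩
  rw [hkey] at hmem
  obtain ⟨p, -, hps, -⟩ := hmem
  simp only [Set.mem_inter_iff, Set.mem_singleton_iff] at hps
  exact hs (hps.1 ▸ hps.2 ▸ rfl)

lemma IsLabelled.ne_nil {α : List A} (h : G.IsLabelled α) : α ≠ [] := by
  obtain ⟨p, hp⟩ := h
  rw [← hp]
  simp [GPath.label, p.ne]

lemma mem_genVertex_self (l : ℕ) (v : V) : v ∈ G.genVertex l v := by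
  show G.labelsToVtx l v = G.labelsToVtx l v
  rfl

lemma finTake_getElem {x : ℕ → A} {N i : ℕ} (h : i < (finTake x N).length) :
    (finTake x N)[i] = x i := by
  simp [finTake]

@[simp] lemma finTake_length (x : ℕ → A) (N : ℕ) : (finTake x N).length = N := by
  simp [finTake]

/-- STEP 1: if `[v]_l` is not disagreeable, every infinite labelled path from `v`
is (fully) periodic with period at most `l`. -/
lemma step1 {v : V} {l : ℕ} (hl : 1 ≤ l) (hnd : ¬ G.DisagreeableVtx l v)
    (q : G.GInfPath) (hq : q.src = v) :
    ∃ k, 1 ≤ k ∧ k ≤ l ∧ ∀ i, q.label (i + k) = q.label i := by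
  unfold DisagreeableVtx at hnd
  push_neg at hnd
  obtain ⟨n₀, hn₀, hall⟩ := hnd 1 one_pos
  set x := q.label with hx
  have hper : ∀ n, n₀ ≤ n → ∃ k, 1 ≤ k ∧ k ≤ l ∧
      ∀ i, i + k < n → x (i + k) = x i := by
    intro n hn
    have hnpos : 0 < n := by omega
    have hlab : G.IsLabelled (finTake x n) := ⟨ipPrefix q n hnpos, ipPrefix_label q n hnpos⟩
    have hsrc : v ∈ G.srcSet (finTake x n) :=
      ⟨ipPrefix q n hnpos, ipPrefix_label q n hnpos, by rw [ipPrefix_src]; exact hq⟩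
    have hlen : (finTake x n).length = n := by simp
    have hnd2 := hall (finTake x n) (by omega)
    have hag : G.Agreeable l (finTake x n) := by
      by_contra hno
      exact hnd2 ⟨hlab, ⟨v, hsrc, mem_genVertex_self l v⟩, hno⟩
    obtain ⟨β, α', γ, hβ, hα', hγ, hlenβγ, hle, he1, he2⟩ := hag
    have hβpos : 0 < β.length := List.length_pos_iff.mpr hβ.ne_nil
    refine ⟨β.length, hβpos, hle, ?_⟩
    intro i hik
    have hlen1 : n = β.length + α'.length := by
      rw [← hlen, he1]; simp
    have hi1 : i + β.length < (finTake x n).length := by omega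
    have hi2 : i < (finTake x n).length := by omega
    have e1 : x (i + β.length) = (finTake x n)[i + β.length] := (finTake_getElem hi1).symm
    have e2 : x i = (finTake x n)[i] := (finTake_getElem hi2).symm
    rw [e1, e2]
    have g1 : (finTake x n)[i + β.length]'hi1 = α'[i]'(by omega) := by
      rw [List.getElem_of_eq he1 hi1, List.getElem_append_right (by omega)]
      congr 1
      omega
    have g2 : (finTake x n)[i]'hi2 = α'[i]'(by omega) := by
      rw [List.getElem_of_eq he2 hi2, List.getElem_append_left (by omega)]
    rw [g1, g2]
  classical
  choose Kf hKf1 hKfl hKfper using fun j : ℕ => hper (n₀ + j) (by omega)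
  have hlpos : 0 < l := hl
  let g : ℕ → Fin l := fun j => ⟨Kf j - 1, by have h1 := hKf1 j; have h2 := hKfl j; omega⟩
  obtain ⟨b, hbinf⟩ := Finite.exists_infinite_fiber g
  have hbinf' : (g ⁻¹' {b}).Infinite := Set.infinite_coe_iff.mp hbinf
  refine ⟨(b : ℕ) + 1, by omega, by have := b.isLt; omega, ?_⟩
  intro i
  obtain ⟨j, hjmem, hji⟩ := hbinf'.exists_gt (i + (b : ℕ) + 1)
  have hKj : Kf j = (b : ℕ) + 1 := by
    have : g j = b := hjmem
    have h1 := hKf1 j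
    have h2 : (g j : ℕ) = (b : ℕ) := by rw [this]
    simp only [g] at h2
    omega
  have := hKfper j i (by omega)
  rwa [hKj] at this

/-- STEP 3: if there is a closed path at `v`, and every infinite word from `v` is
fully periodic with period at most `l`, then all infinite words from `v` coincide. -/
lemma loop_unique {v : V} {l : ℕ} (hl : 1 ≤ l)
    (hper : ∀ q : G.GInfPath, q.src = v →
      ∃ k, 1 ≤ k ∧ k ≤ l ∧ ∀ i, q.label (i + k) = q.label i)
    (C : List Ed) (hCpos : 0 < C.length)
    (hCch : C.Chain' (fun e f => G.rng e = G.src f))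
    (hC0 : G.src (C[0]'hCpos) = v)
    (hC1 : G.rng (C[C.length - 1]'(by omega)) = v)
    (qx qy : G.GInfPath) (hqx : qx.src = v) (hqy : qy.src = v) :
    ∀ i, qx.label i = qy.label i := by
  set c := C.length with hc
  set m := l.factorial with hm
  have hmpos : 0 < m := l.factorial_pos
  have hmc : 0 < m * c := Nat.mul_pos hmpos hCpos
  set Lm := wpow C m with hLm
  have hLmlen : Lm.length = m * c := wpow_length C m
  have hCne : C ≠ [] := by
    intro hemp
    rw [hc, hemp] at hCpos; simp at hCpos
  have hLget : ∀ (i : ℕ) (h : i < Lm.length),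
      Lm[i] = C[i % c]'(Nat.mod_lt _ hCpos) := fun i h => wpow_getElem C hCne m i h
  have hCget := fun (i : ℕ) (h : i + 1 < c) =>
    List.isChain_iff_getElem.mp hCch i (by omega)
  have hLch : Lm.Chain' (fun e f => G.rng e = G.src f) := by
    rw [List.Chain', List.isChain_iff_getElem]
    intro i hi
    rw [hLget i (by omega), hLget (i + 1) (by omega)]
    have hmod : i % c < c := Nat.mod_lt _ hCpos
    have hmodsucc : (i + 1) % c = (i % c + 1) % c := by
      rw [Nat.mod_add_mod]
    rcases lt_or_ge (i % c + 1) c with hcase | hcase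
    · have h2 : (i + 1) % c = i % c + 1 := by
        rw [hmodsucc]; exact Nat.mod_eq_of_lt hcase
      have := hCget (i % c) (by omega)
      rw [getElem_idx_congr C h2]
      exact this
    · have heq : i % c + 1 = c := by omega
      have h2 : (i + 1) % c = 0 := by
        rw [hmodsucc, heq, Nat.mod_self]
      rw [getElem_idx_congr C h2, getElem_idx_congr C (show i % c = c - 1 by omega)]
      rw [hC1, hC0]
  have hLmpos : 0 < Lm.length := by omega
  have hcmc : c ≤ m * c := Nat.le_mul_of_pos_left c hmpos
  have hLlast : Lm[Lm.length - 1]'(by omega) = C[c - 1]'(by omega) := by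
    rw [hLget (Lm.length - 1) (by omega)]
    apply getElem_idx_congr
    have harith : Lm.length - 1 = (c - 1) + (m - 1) * c := by
      rw [hLmlen, Nat.sub_mul, Nat.one_mul]
      omega
    rw [harith, Nat.add_mul_mod_self_right]
    exact Nat.mod_eq_of_lt (by omega)
  -- the key construction
  have main : ∀ q : G.GInfPath, q.src = v → ∀ (i : ℕ) (hi : i < Lm.length),
      q.label i = G.lbl (Lm[i]'hi) := by
    intro q hqv
    have hlink : ∀ _ : 0 < Lm.length,
        G.rng (Lm[Lm.length - 1]'(by omega)) = G.src (q.edges 0) := by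
      intro _
      rw [hLlast, hC1, ← hqv]
      rfl
    set Q := consPath Lm q hLch hlink with hQ
    have hQsrc : Q.src = v := by
      rw [GInfPath.src_eq]
      rw [consPath_edges_lt (by omega), hLget 0 (by omega),
        getElem_idx_congr C (show (0 : ℕ) % c = 0 from Nat.mod_eq_of_lt hCpos)]
      exact hC0
    obtain ⟨k, hk1, hkl, hkper⟩ := hper Q hQsrc
    have hdvd : k ∣ m * c := Dvd.dvd.mul_right (Nat.dvd_factorial hk1 hkl) c
    have hWq : ∀ j, q.label j = Q.label j := by
      intro j
      have h1 : Q.label (j + m * c) = Q.label j := per_of_dvd hkper hdvd j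
      have h2 : Q.label (j + m * c) = q.label j := by
        show G.lbl (Q.edges (j + m * c)) = G.lbl (q.edges j)
        rw [hQ, consPath_edges_ge (by omega)]
        congr 2
        omega
      rw [← h2, h1]
    intro i hi
    rw [hWq i]
    show G.lbl (Q.edges i) = _
    rw [consPath_edges_lt hi]
  -- conclude
  have hagree : ∀ i, i < m * c → qx.label i = qy.label i := by
    intro i hi
    rw [main qx hqx i (by omega), main qy hqy i (by omega)]
  obtain ⟨px, hpx1, hpxl, hpxper⟩ := hper qx hqx
  obtain ⟨py, hpy1, hpyl, hpyper⟩ := hper qy hqy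
  have hxmc : ∀ i, qx.label (i + m * c) = qx.label i :=
    per_of_dvd hpxper (Dvd.dvd.mul_right (Nat.dvd_factorial hpx1 hpxl) c)
  have hymc : ∀ i, qy.label (i + m * c) = qy.label i :=
    per_of_dvd hpyper (Dvd.dvd.mul_right (Nat.dvd_factorial hpy1 hpyl) c)
  intro i
  rw [per_mod hmc hxmc i, per_mod hmc hymc i]
  exact hagree _ (Nat.mod_lt _ hmc)

lemma genVertex_singleton (hsing : ∀ w : V, ({w} : Set V) ∈ G.barE) (u : V) :
    ∃ l', 1 ≤ l' ∧ G.genVertex l' u = {u} := by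
  obtain ⟨l', F, hl', hFu⟩ := hsing u
  have hu : u ∈ ⋃ w ∈ F, G.genVertex l' w := by
    rw [← hFu]; exact rfl
  simp only [Set.mem_iUnion] at hu
  obtain ⟨w, hwF, hw⟩ := hu
  have hw' : G.labelsToVtx l' u = G.labelsToVtx l' w := hw
  have hsubw : G.genVertex l' w ⊆ {u} := by
    intro a ha
    rw [hFu]
    exact Set.mem_biUnion hwF ha
  refine ⟨l', hl', Set.Subset.antisymm ?_ ?_⟩
  · intro z hz
    apply hsubw
    show G.labelsToVtx l' z = G.labelsToVtx l' w
    rw [← hw']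
    exact hz
  · intro z hz
    rw [Set.mem_singleton_iff] at hz
    subst hz
    exact mem_genVertex_self l' z

/-- STEP 2: uniqueness of the infinite labelled word emanating from `v`. -/
lemma unique_word (hwlr : G.WeaklyLeftResolving G.barE)
    (hedge : ∀ e f : Ed, G.src e = G.src f → G.rng e = G.rng f → G.lbl e = G.lbl f → e = f)
    (hsc : G.StronglyCofinal)
    (hsing : ∀ w : V, ({w} : Set V) ∈ G.barE)
    {v : V} {l : ℕ} (hl : 1 ≤ l) (hnd : ¬ G.DisagreeableVtx l v)
    (qx qy : G.GInfPath) (hqx : qx.src = v) (hqy : qy.src = v) :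
    ∀ i, qx.label i = qy.label i := by
  have hper : ∀ q : G.GInfPath, q.src = v →
      ∃ k, 1 ≤ k ∧ k ≤ l ∧ ∀ i, q.label (i + k) = q.label i :=
    fun q hq => step1 hl hnd q hq
  obtain ⟨p, hp1, hpl, hpper⟩ := hper qx hqx
  obtain ⟨p', hp'1, hp'l, hp'per⟩ := hper qy hqy
  set M := l.factorial with hMdef
  have hMpos : 0 < M := Nat.factorial_pos l
  set u := G.src (qy.edges M) with hudef
  obtain ⟨l', hl', hsingu⟩ := genVertex_singleton hsing u
  obtain ⟨N, hN1, mm, lds, hldslab, hsub⟩ :=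
    hsc qx.label ⟨qx, rfl⟩ l' hl' u v ⟨qx, rfl, hqx⟩
  have hNpos : 0 < N := hN1
  have haNmem : G.src (qx.edges N) ∈ G.relRange (G.genVertex 1 v) (finTake qx.label N) := by
    refine ⟨ipPrefix qx N hNpos, ipPrefix_label qx N hNpos, ?_, ipPrefix_rng qx N hNpos⟩
    rw [ipPrefix_src, hqx]
    exact mem_genVertex_self 1 v
  have hmem2 := hsub haNmem
  rw [Set.mem_iUnion] at hmem2
  obtain ⟨idx, P, hPlab, hPsrc, hPrng⟩ := hmem2
  rw [hsingu, Set.mem_singleton_iff] at hPsrc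
  -- form the list L = (first M edges of qy) ++ P.edges
  set Ym := List.ofFn (fun i : Fin M => qy.edges i) with hYmdef
  set L := Ym ++ P.edges with hLdef
  have hYmlen : Ym.length = M := by rw [hYmdef]; simp
  have hPpos : 0 < P.edges.length := List.length_pos_iff.mpr P.ne
  have hLlen : L.length = M + P.edges.length := by rw [hLdef]; simp [hYmlen]
  have hYmne : Ym ≠ [] := by
    intro hemp
    rw [hemp] at hYmlen
    simp at hYmlen
    omega
  have hYmch : Ym.Chain' (fun e f => G.rng e = G.src f) := (ipPrefix qy M hMpos).chain
  have hbound : G.rng (Ym.getLast hYmne) = u := by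
    rw [List.getLast_eq_getElem, List.getElem_of_eq hYmdef (by omega), List.getElem_ofFn]
    show G.rng (qy.edges (Ym.length - 1)) = u
    rw [hYmlen]
    have := qy.chain (M - 1)
    rw [show M - 1 + 1 = M by omega] at this
    rw [this]
  have hLch : L.Chain' (fun e f => G.rng e = G.src f) := by
    rw [hLdef, List.Chain', List.isChain_append]
    refine ⟨hYmch, P.chain, ?_⟩
    intro a ha b hb
    rw [List.getLast?_eq_getLast hYmne, Option.mem_some_iff] at ha
    rw [List.head?_eq_head P.ne, Option.mem_some_iff] at hb
    subst ha; subst hb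
    rw [hbound, ← hPsrc]
    rfl
  have hlink : ∀ _ : 0 < L.length,
      G.rng (L[L.length - 1]'(by omega)) = G.src ((ipTail qx N).edges 0) := by
    intro _
    have e1 : L[L.length - 1]'(by omega) = P.edges[P.edges.length - 1]'(by omega) := by
      rw [List.getElem_of_eq hLdef (by omega), List.getElem_append_right (by omega)]
      congr 1
      omega
    have e2 : P.rng = G.rng (P.edges[P.edges.length - 1]'(by omega)) := by
      show G.rng (P.edges.getLast P.ne) = _
      rw [List.getLast_eq_getElem]
    show G.rng (L[L.length - 1]'(by omega)) = G.src (qx.edges (N + 0))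
    rw [e1, ← e2, hPrng, Nat.add_zero]
  set Q := consPath L (ipTail qx N) hLch hlink with hQdef
  set D := L.length with hDdef
  have hMD : M ≤ D := by omega
  have hDpos : 0 < D := by omega
  have hQsrc : Q.src = v := by
    rw [GInfPath.src_eq, hQdef, consPath_edges_lt (show 0 < L.length by omega)]
    rw [List.getElem_of_eq hLdef (by omega), List.getElem_append_left (by omega)]
    rw [List.getElem_of_eq hYmdef (by omega), List.getElem_ofFn]
    exact hqy
  obtain ⟨k, hk1, hkl, hkper⟩ := hper Q hQsrc
  have htail : ∀ i, Q.label (D + i) = qx.label (N + i) := by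
    intro i
    show G.lbl (Q.edges (D + i)) = G.lbl (qx.edges (N + i))
    rw [hQdef, consPath_edges_ge (by omega)]
    rw [ipTail_edges]
    congr 2
    omega
  have hL1 : ∀ t, t ≤ D → t ≤ N → Q.label (D - t) = qx.label (N - t) := by
    intro t htD htN
    have htp : t ≤ p * t * k :=
      le_trans (Nat.le_mul_of_pos_left t hp1) (Nat.le_mul_of_pos_right _ hk1)
    have e1 : Q.label ((D - t) + (p * t) * k) = Q.label (D - t) := per_add_mul hkper (p * t) (D - t)
    have e2 : (D - t) + (p * t) * k = D + ((p * t) * k - t) := by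
      have h' : p * t * k = (p * t) * k := by ring
      omega
    have e3 : Q.label (D + ((p * t) * k - t)) = qx.label (N + ((p * t) * k - t)) := htail _
    have e4 : N + ((p * t) * k - t) = (N - t) + (t * k) * p := by
      have h' : (p * t) * k = (t * k) * p := by ring
      omega
    calc Q.label (D - t) = Q.label ((D - t) + (p * t) * k) := e1.symm
      _ = Q.label (D + ((p * t) * k - t)) := by rw [e2]
      _ = qx.label (N + ((p * t) * k - t)) := e3
      _ = qx.label ((N - t) + (t * k) * p) := by rw [e4]
      _ = qx.label (N - t) := per_add_mul hpper (t * k) (N - t)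
  have hL2 : ∀ t, t ≤ D → t ≤ N → Q.edges (D - t) = qx.edges (N - t) := by
    intro t
    induction t with
    | zero =>
      intro _ _
      rw [Nat.sub_zero, Nat.sub_zero, hQdef, consPath_edges_ge (by omega)]
      rw [ipTail_edges]
      congr 1
      omega
    | succ t ih =>
      intro htD htN
      have h1 := ih (by omega) (by omega)
      have c1 : G.rng (Q.edges (D - (t + 1))) = G.src (Q.edges (D - t)) := by
        have := Q.chain (D - (t + 1))
        rwa [show D - (t + 1) + 1 = D - t by omega] at this
      have c2 : G.rng (qx.edges (N - (t + 1))) = G.src (qx.edges (N - t)) := by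
        have := qx.chain (N - (t + 1))
        rwa [show N - (t + 1) + 1 = N - t by omega] at this
      have hr : G.rng (Q.edges (D - (t + 1))) = G.rng (qx.edges (N - (t + 1))) := by
        rw [c1, c2, h1]
      exact backdet hwlr hsing hedge hr (hL1 (t + 1) htD htN)
  rcases lt_trichotomy D N with hDN | hDN | hDN
  · -- x-path revisits v
    have h0 := hL2 D le_rfl (le_of_lt hDN)
    rw [Nat.sub_self] at h0
    have hv : G.src (qx.edges (N - D)) = v := by
      rw [← h0]
      exact hQsrc
    have hs1 : 0 < N - D := by omega
    refine loop_unique hl hper (List.ofFn fun i : Fin (N - D) => qx.edges i)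
      (by simpa using hs1) (ipPrefix qx (N - D) hs1).chain ?_ ?_ qx qy hqx hqy
    · rw [List.getElem_ofFn]
      exact hqx
    · simp only [List.length_ofFn, List.getElem_ofFn]
      have := qx.chain (N - D - 1)
      rw [show N - D - 1 + 1 = N - D by omega] at this
      rw [this]
      exact hv
  · -- full coincidence up to M
    have hall : ∀ n, Q.edges n = qx.edges n := by
      intro n
      rcases lt_or_ge n D with hn | hn
      · have := hL2 (D - n) (by omega) (by omega)
        rwa [show D - (D - n) = n by omega, show N - (D - n) = n by omega] at this
      · rw [hQdef, consPath_edges_ge (by omega)]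
        rw [ipTail_edges]
        congr 1
        omega
    have hagree : ∀ i, i < M → qx.label i = qy.label i := by
      intro i hi
      have e1 : Q.edges i = qy.edges i := by
        rw [hQdef, consPath_edges_lt (show i < L.length by omega)]
        rw [List.getElem_of_eq hLdef (by omega), List.getElem_append_left (by omega)]
        rw [List.getElem_of_eq hYmdef (by omega), List.getElem_ofFn]
      calc qx.label i = G.lbl (qx.edges i) := rfl
        _ = G.lbl (Q.edges i) := by rw [hall i]
        _ = G.lbl (qy.edges i) := by rw [e1]
        _ = qy.label i := rfl
    intro i
    have hxM : ∀ j, qx.label (j + M) = qx.label j :=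
      per_of_dvd hpper (Nat.dvd_factorial hp1 hpl)
    have hyM : ∀ j, qy.label (j + M) = qy.label j :=
      per_of_dvd hp'per (Nat.dvd_factorial hp'1 hp'l)
    rw [per_mod hMpos hxM i, per_mod hMpos hyM i]
    exact hagree _ (Nat.mod_lt _ hMpos)
  · -- Q revisits v
    have h0 := hL2 N (le_of_lt hDN) le_rfl
    rw [Nat.sub_self] at h0
    have hv : G.src (Q.edges (D - N)) = v := by
      rw [h0, ← hqx]
      rfl
    have hs1 : 0 < D - N := by omega
    refine loop_unique hl hper (List.ofFn fun i : Fin (D - N) => Q.edges i)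
      (by simpa using hs1) (ipPrefix Q (D - N) hs1).chain ?_ ?_ qx qy hqx hqy
    · rw [List.getElem_ofFn]
      exact hQsrc
    · simp only [List.length_ofFn, List.getElem_ofFn]
      have := Q.chain (D - N - 1)
      rw [show D - N - 1 + 1 = D - N by omega] at this
      rw [this]
      exact hv

end LabelledGraph

end Aux


/-- In a weakly left-resolving, strongly cofinal labelled space
`(E,𝓛,Ē^{0,-})` with all singletons in `Ē^{0,-}`, if `[v]_l` is not disagreeable
then `𝓛(vE^∞) = {β^∞}` for a single simple labelled path `β ∈ 𝓛(E^{≤l})`. -/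
theorem not_disagreeable_implies_unique_infinite_path
    {V Ed A : Type*} [Countable A] (G : LabelledGraph V Ed A)
    (hacc : G.Accommodating G.barE)
    (hwlr : G.WeaklyLeftResolving G.barE)
    (hsa : G.StandingAssumptions G.barE)
    (hsc : G.StronglyCofinal)
    (hsing : ∀ w : V, ({w} : Set V) ∈ G.barE)
    (v : V) (l : ℕ) (hl : 1 ≤ l)
    (h : ¬ G.DisagreeableVtx l v) :
    ∃ β : List A, G.IsLabelled β ∧ β.length ≤ l ∧ SimpleWord β ∧
      ∀ x : ℕ → A, (∃ q : G.GInfPath, q.label = x ∧ q.src = v) ↔ isPowInf β x := by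
  classical
  -- STEP 0: build an infinite path starting at v
  have hpick : ∀ u : V, ∃ e : Ed, G.src e = u := hsa.no_sinks
  let f : V → Ed := fun u => (hpick u).choose
  have hf : ∀ u, G.src (f u) = u := fun u => (hpick u).choose_spec
  let E : ℕ → Ed := fun n => Nat.rec (f v) (fun _ e => f (G.rng e)) n
  let q0 : G.GInfPath := ⟨E, fun n => (hf (G.rng (E n))).symm⟩
  have hq0 : q0.src = v := hf v
  set x0 := q0.label with hx0def
  obtain ⟨k0, hk01, hk0l, hk0per⟩ := LabelledGraph.step1 hl h q0 hq0
  have hex : ∃ p, 1 ≤ p ∧ ∀ i, x0 (i + p) = x0 i := ⟨k0, hk01, hk0per⟩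
  set p := Nat.find hex with hpdef
  obtain ⟨hp1, hpper⟩ := Nat.find_spec hex
  have hpl : p ≤ l := le_trans (Nat.find_le ⟨hk01, hk0per⟩) hk0l
  have hppos : 0 < p := hp1
  set β := List.ofFn (fun i : Fin p => x0 i) with hβdef
  have hβlen : β.length = p := by rw [hβdef]; simp
  have hβne : β ≠ [] := by
    intro hemp
    rw [hemp] at hβlen
    simp at hβlen
    omega
  have hβget : ∀ (i : ℕ) (hi : i < β.length), β[i] = x0 i := by
    intro i hi
    rw [List.getElem_of_eq hβdef hi, List.getElem_ofFn]
  have hx0mod : ∀ n, x0 n = x0 (n % p) := fun n => per_mod hppos hpper n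
  refine ⟨β, ?_, by omega, ⟨hβne, ?_⟩, ?_⟩
  · -- β is labelled
    refine ⟨LabelledGraph.ipPrefix q0 p hppos, ?_⟩
    rw [LabelledGraph.ipPrefix_label, hβdef]
    rfl
  · -- β is simple
    rintro ⟨δ, n, hδne, hδlt, hn1, hβpow⟩
    have hd1 : 0 < δ.length := List.length_pos_iff.mpr hδne
    have hdvd : δ.length ∣ p := ⟨n, by rw [← hβlen, hβpow, wpow_length]; ring⟩
    have hδget : ∀ (j : ℕ) (hj : j < β.length),
        β[j] = δ[j % δ.length]'(Nat.mod_lt _ hd1) := by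
      intro j hj
      rw [List.getElem_of_eq hβpow hj, wpow_getElem δ hδne n]
    have key : ∀ m, x0 m = δ[m % δ.length]'(Nat.mod_lt _ hd1) := by
      intro m
      have h1 : m % p < β.length := by rw [hβlen]; exact Nat.mod_lt _ hppos
      rw [hx0mod m, ← hβget (m % p) h1, hδget (m % p) h1]
      congr 1
      exact Nat.mod_mod_of_dvd m hdvd
    have hper' : ∀ i, x0 (i + δ.length) = x0 i := by
      intro i
      rw [key (i + δ.length), key i]
      congr 1
      exact Nat.add_mod_right i δ.length
    have hδp : δ.length < p := by rw [← hβlen]; exact hδlt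
    exact Nat.find_min hex hδp ⟨hd1, hper'⟩
  · -- characterization of infinite words from v
    intro x
    constructor
    · rintro ⟨q, hqlab, hqsrc⟩
      have huniq := LabelledGraph.unique_word hwlr hsa.edge_eq hsc hsing hl h q q0 hqsrc hq0
      refine ⟨hβne, ?_⟩
      intro n
      have hmlt : n % β.length < β.length := Nat.mod_lt _ (by omega)
      rw [List.get_eq_getElem]
      have e1 : x n = x0 n := by rw [← hqlab]; exact huniq n
      calc x n = x0 n := e1
        _ = x0 (n % p) := hx0mod n
        _ = x0 (n % β.length) := by rw [hβlen]
        _ = β[n % β.length] := (hβget _ hmlt).symm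
    · rintro ⟨hne, hx⟩
      refine ⟨q0, ?_, hq0⟩
      funext n
      have h2 := hx n
      rw [List.get_eq_getElem] at h2
      have hmlt : n % β.length < β.length := Nat.mod_lt _ (by omega)
      show x0 n = x n
      calc x0 n = x0 (n % p) := hx0mod n
        _ = x0 (n % β.length) := by rw [hβlen]
        _ = β[n % β.length] := (hβget _ hmlt).symm
        _ = x n := h2.symm
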